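/- Let G be a countable group and K a field. If the group algebra K[G] is one-sided Noetherian, then G is of K-linear Markov type: for every finite-dimensional K-vector space A, every linear subshift of A^G is of finite type. -/

import Mathlib

def shiftSigma (G : Type*) [Group G] {A : Type*} (D : Set G) (P : Set (D → A)) :
    Set (G → A) :=
  {x | ∀ g : G, (fun d : D => x (g * (d : G))) ∈ P}

def prodiscreteTop (G A : Type*) : TopologicalSpace (G → A) :=
  @Pi.topologicalSpace G (fun _ => A) (fun _ => ⊥)

def IsLinearSubshift (K : Type*) {G A : Type*} [Field K] [Group G] [AddCommGroup A]
    [Module K A] (S : Set (G → A)) : Prop :=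
  (∃ M : Submodule K (G → A), (M : Set (G → A)) = S) ∧
    (∀ g : G, ∀ x ∈ S, (fun h => x (g⁻¹ * h)) ∈ S) ∧
    @IsClosed _ (prodiscreteTop G A) S

def IsSFT {G A : Type*} [Group G] (S : Set (G → A)) : Prop :=
  ∃ (D : Finset G) (P : Set (↥(D : Set G) → A)), S = shiftSigma G (D : Set G) P

def IsLCA (K : Type*) {G A : Type*} [Field K] [Group G] [AddCommGroup A] [Module K A]
    (τ : (G → A) → (G → A)) : Prop :=
  IsLinearMap K τ ∧ ∃ (M : Finset G) (μ : (↥(M : Set G) → A) → A), IsLinearMap K μ ∧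
    ∀ (x : G → A) (g : G), τ x g = μ (fun m : (M : Set G) => x (g * (m : G)))

section Aux

variable {G : Type} (K : Type) [Group G] [Field K]
variable {A : Type} [AddCommGroup A] [Module K A]
variable {n : ℕ} (b : Module.Basis (Fin n) K A)

/-- The evaluation pairing between `(MonoidAlgebra K G)^n` (viewed as finitely supported
dual functionals via the basis `b`) and a configuration `x : G → A`. -/
noncomputable def evL (x : G → A) : (Fin n → MonoidAlgebra K G) →ₗ[K] K :=
  ∑ i, (Finsupp.linearCombination K (fun g => b.coord i (x g))).comp
    ((MonoidAlgebra.coeffLinearEquiv K).toLinearMap.comp (LinearMap.proj (R := K) (φ := fun _ : Fin n => MonoidAlgebra K G) i))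

lemma evL_apply (x : G → A) (μ : Fin n → MonoidAlgebra K G) :
    evL K b x μ = ∑ i, Finsupp.linearCombination K (fun g => b.coord i (x g)) (μ i).coeff := by
  simp only [evL, LinearMap.sum_apply, LinearMap.comp_apply, LinearMap.proj_apply]
  exact Finset.sum_congr rfl fun i _ => rfl

lemma single_mul_eq (g : G) (c : K) (f : MonoidAlgebra K G) :
    (MonoidAlgebra.single g c * f).coeff = c • Finsupp.mapDomain (⇑(Equiv.mulLeft g)) f.coeff := by
  ext k
  rw [MonoidAlgebra.coeff_single_mul_apply, Finsupp.smul_apply, Finsupp.mapDomain_equiv_apply]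
  simp

lemma evL_single_smul (x : G → A) (g : G) (c : K) (μ : Fin n → MonoidAlgebra K G) :
    evL K b x (MonoidAlgebra.single g c • μ) = c * evL K b (fun h => x (g * h)) μ := by
  rw [evL_apply, evL_apply, Finset.mul_sum]
  refine Finset.sum_congr rfl fun i _ => ?_
  have : (MonoidAlgebra.single g c • μ) i = MonoidAlgebra.single g c * μ i := rfl
  rw [this, single_mul_eq, map_smul, smul_eq_mul, Finsupp.linearCombination_mapDomain]
  congr 1

lemma evL_mul_smul_zero (x : G → A) (μ : Fin n → MonoidAlgebra K G)
    (hx : ∀ g : G, evL K b (fun h => x (g * h)) μ = 0) (r : MonoidAlgebra K G) :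
    ∀ g : G, evL K b (fun h => x (g * h)) (r • μ) = 0 := by
  induction r using MonoidAlgebra.induction_on with
  | of g' =>
    intro g
    have h1 : (MonoidAlgebra.of K G g') • μ = MonoidAlgebra.single g' (1 : K) • μ := rfl
    rw [h1, evL_single_smul, one_mul]
    have h2 : (fun h => x (g * (g' * h))) = fun h => x ((g * g') * h) := by
      funext h; rw [mul_assoc]
    rw [h2, hx (g * g')]
  | add f₁ f₂ ih₁ ih₂ =>
    intro g
    rw [add_smul, map_add, ih₁ g, ih₂ g, add_zero]
  | smul c f ih =>
    intro g
    rw [smul_assoc, map_smul, ih g, smul_zero]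

/-- The annihilator submodule of `S` inside `(MonoidAlgebra K G)^n`. -/
noncomputable def annN (S : Set (G → A))
    (hinv : ∀ g : G, ∀ x ∈ S, (fun h => x (g⁻¹ * h)) ∈ S) :
    Submodule (MonoidAlgebra K G) (Fin n → MonoidAlgebra K G) where
  carrier := {μ | ∀ x ∈ S, evL K b x μ = 0}
  add_mem' := by
    intro μ ν hμ hν x hx
    rw [map_add, hμ x hx, hν x hx, add_zero]
  zero_mem' := by intro x hx; simp
  smul_mem' := by
    intro r μ hμ x hx
    have hx' : ∀ g : G, evL K b (fun h => x (g * h)) μ = 0 := by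
      intro g
      have hxg : (fun h => x (g * h)) ∈ S := by
        have := hinv g⁻¹ x hx
        simpa using this
      exact hμ _ hxg
    have := evL_mul_smul_zero K b x μ hx' r 1
    simpa using this

end Aux

theorem main_aux {G : Type} (K : Type) [Group G] [Field K] {A : Type} [AddCommGroup A]
    [Module K A] [FiniteDimensional K A] (hN : IsNoetherianRing (MonoidAlgebra K G))
    (S : Set (G → A)) (hS : IsLinearSubshift K S) : IsSFT S := by
  classical
  obtain ⟨⟨M, hM⟩, hinv, hcl⟩ := hS
  set n := Module.finrank K A with hn
  set b : Module.Basis (Fin n) K A := Module.finBasis K A with hb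
  set R := MonoidAlgebra K G with hR
  set N := annN K b S hinv with hNdef
  haveI : IsNoetherian R R := hN
  have hfg : N.FG := IsNoetherian.noetherian N
  obtain ⟨s, hs⟩ := hfg
  have hsN : ∀ μ ∈ s, μ ∈ N := fun μ hμ => hs ▸ Submodule.subset_span hμ
  -- the window
  set D : Finset G := s.sup (fun μ => Finset.univ.sup (fun i => (μ i).coeff.support)) with hD
  have hsupp : ∀ μ ∈ s, ∀ i : Fin n, (μ i).coeff.support ⊆ D := by
    intro μ hμ i
    rw [hD]
    calc (μ i).coeff.support ≤ Finset.univ.sup (fun j => (μ j).coeff.support) :=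
          Finset.le_sup (f := fun j => (μ j).coeff.support) (Finset.mem_univ i)
      _ ≤ _ := Finset.le_sup (f := fun ν => Finset.univ.sup fun j => (ν j).coeff.support) hμ
  -- evaluation over the window
  have hevD : ∀ μ ∈ s, ∀ y : G → A,
      evL K b y μ = ∑ i, ∑ d : ↥(D : Set G), (μ i).coeff ↑d * (b.coord i) (y ↑d) := by
    intro μ hμ y
    rw [evL_apply]
    refine Finset.sum_congr rfl fun i _ => ?_
    rw [Finsupp.linearCombination_apply, Finsupp.sum]
    simp only [smul_eq_mul]
    have : ∑ d : ↥(D : Set G), (μ i).coeff ↑d * (b.coord i) (y ↑d)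
        = ∑ d ∈ D, (μ i).coeff d * (b.coord i) (y d) :=
      Finset.sum_finset_coe (fun d => (μ i).coeff d * (b.coord i) (y d)) D
    rw [this]
    refine Finset.sum_subset (hsupp μ hμ i) fun g _ hg => ?_
    rw [Finsupp.notMem_support_iff.mp hg, zero_mul]
  -- the SFT data
  refine ⟨D, {p : ↥(D : Set G) → A |
    ∀ μ ∈ s, ∑ i, ∑ d : ↥(D : Set G), (μ i).coeff ↑d * (b.coord i) (p d) = 0}, ?_⟩
  ext x
  constructor
  · -- S ⊆ SFT
    intro hx g
    intro μ hμ
    have h1 : evL K b x (MonoidAlgebra.single g (1 : K) • μ) = 0 :=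
      (N.smul_mem (MonoidAlgebra.single g (1 : K)) (hsN μ hμ)) x hx
    rw [evL_single_smul, one_mul] at h1
    have := hevD μ hμ (fun h => x (g * h))
    rw [h1] at this
    exact this.symm
  · -- SFT ⊆ S
    intro hx
    have hx' : ∀ μ ∈ s, ∀ g : G, evL K b (fun h => x (g * h)) μ = 0 := by
      intro μ hμ g
      rw [hevD μ hμ (fun h => x (g * h))]
      exact hx g μ hμ
    -- all elements of N annihilate all translates of x
    have hall : ∀ ν ∈ N, ∀ g : G, evL K b (fun h => x (g * h)) ν = 0 := by
      intro ν hν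
      rw [← hs] at hν
      induction hν using Submodule.span_induction with
      | mem ν hν => exact hx' ν hν
      | zero => intro g; rw [map_zero]
      | add ν₁ ν₂ h₁ h₂ ih₁ ih₂ => intro g; rw [map_add, ih₁ g, ih₂ g, add_zero]
      | smul r ν hν ih => exact evL_mul_smul_zero K b x ν ih r
    have hx1 : ∀ ν ∈ N, evL K b x ν = 0 := by
      intro ν hν
      have := hall ν hν 1
      simpa using this
    -- closure argument
    by_contra hxS
    letI : TopologicalSpace A := ⊥
    have hopen : IsOpen Sᶜ := hcl.isOpen_compl
    obtain ⟨F, u, hu, hsub⟩ := isOpen_pi_iff.mp hopen x hxS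
    -- no element of S agrees with x on F
    have hdis : ∀ y ∈ S, ∃ a ∈ F, y a ≠ x a := by
      intro y hy
      by_contra h
      push_neg at h
      have : y ∈ (↑F : Set G).pi u := by
        intro a ha
        rw [h a ha]
        exact (hu a ha).2
      exact (hsub this) hy
    -- restriction map and image subspace
    set ρ : (G → A) →ₗ[K] ({a // a ∈ F} → A) :=
      LinearMap.funLeft K A (fun d : {a // a ∈ F} => (d : G)) with hρ
    set W : Submodule K ({a // a ∈ F} → A) := M.map ρ with hW
    have hxW : ρ x ∉ W := by
      intro ⟨y, hyM, hyx⟩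
      have hyS : y ∈ S := hM ▸ hyM
      obtain ⟨a, haF, hne⟩ := hdis y hyS
      apply hne
      have := congrFun hyx ⟨a, haF⟩
      exact this
    -- a separating functional
    have hq : W.mkQ (ρ x) ≠ 0 := by
      rw [Submodule.mkQ_apply]
      intro h
      exact hxW ((Submodule.Quotient.mk_eq_zero W).mp h)
    obtain ⟨φ0, hφ0⟩ : ∃ φ0 : Module.Dual K (({a // a ∈ F} → A) ⧸ W),
        φ0 (W.mkQ (ρ x)) ≠ 0 := by
      by_contra h
      push_neg at h
      exact hq ((Module.forall_dual_apply_eq_zero_iff K _).mp h)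
    set φ : ({a // a ∈ F} → A) →ₗ[K] K := φ0.comp W.mkQ with hφ
    have hφW : ∀ w ∈ W, φ w = 0 := by
      intro w hw
      have : W.mkQ w = 0 := (Submodule.Quotient.mk_eq_zero W).mpr hw
      rw [hφ, LinearMap.comp_apply, this, map_zero]
    -- build the corresponding annihilator element
    set μ : Fin n → MonoidAlgebra K G :=
      fun i => ∑ f : {a // a ∈ F}, MonoidAlgebra.single (f : G) (φ (Pi.single f (b i)))
      with hμdef
    have hμev : ∀ y : G → A, evL K b y μ = φ (ρ y) := by
      intro y
      rw [evL_apply]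
      have h1 : ∀ i : Fin n, Finsupp.linearCombination K (fun g => b.coord i (y g)) (μ i).coeff
          = ∑ f : {a // a ∈ F}, φ (Pi.single f (b i)) * b.coord i (y ↑f) := by
        intro i
        rw [hμdef, MonoidAlgebra.coeff_sum, map_sum]
        refine Finset.sum_congr rfl fun f _ => ?_
        rw [MonoidAlgebra.coeff_single, Finsupp.linearCombination_single, smul_eq_mul]
      have h2 : ρ y = ∑ f : {a // a ∈ F}, Pi.single f (y ↑f) := by
        rw [Finset.univ_sum_single (fun d : {a // a ∈ F} => y ↑d)]
        rfl
      rw [h2, map_sum]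
      have h3 : ∀ f : {a // a ∈ F}, φ (Pi.single f (y ↑f))
          = ∑ i, b.coord i (y ↑f) * φ (Pi.single f (b i)) := by
        intro f
        have hy : y ↑f = ∑ i, b.coord i (y ↑f) • b i := by
          have := b.sum_repr (y ↑f)
          simp only [Module.Basis.coord_apply]
          exact this.symm
        calc φ (Pi.single f (y ↑f))
            = φ ((LinearMap.single K (fun _ : {a // a ∈ F} => A) f) (y ↑f)) := rfl
          _ = φ ((LinearMap.single K (fun _ : {a // a ∈ F} => A) f)
                (∑ i, b.coord i (y ↑f) • b i)) := by rw [← hy]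
          _ = ∑ i, b.coord i (y ↑f) * φ (Pi.single f (b i)) := by
                rw [map_sum, map_sum]
                refine Finset.sum_congr rfl fun i _ => ?_
                rw [map_smul, map_smul, smul_eq_mul]
                rfl
      rw [Finset.sum_congr rfl fun f _ => h3 f, Finset.sum_comm]
      refine Finset.sum_congr rfl fun i _ => ?_
      rw [h1 i]
      refine Finset.sum_congr rfl fun f _ => ?_
      rw [mul_comm]
    have hμN : μ ∈ N := by
      intro y hy
      rw [hμev y]
      exact hφW (ρ y) ⟨y, hM ▸ hy, rfl⟩
    have := hx1 μ hμN
    rw [hμev x] at this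
    exact hφ0 (by rwa [hφ, LinearMap.comp_apply] at this)

theorem stmt10 {G : Type} (K : Type) [Group G] [Countable G] [Field K]
    (hN : IsNoetherianRing (MonoidAlgebra K G)) :
    ∀ (A : Type) (_ : AddCommGroup A) (_ : Module K A), FiniteDimensional K A →
      ∀ S : Set (G → A), IsLinearSubshift K S → IsSFT S := by
  intro A ia im hfd S hS
  letI := ia
  letI := im
  haveI := hfd
  exact main_aux K hN S hS
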